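/- Let S be a nonempty finite set of states, A a set of actions, P : S × A × S → ℝ with P(s'|s,a) ≥ 0 and ∑_{s'∈S} P(s'|s,a) = 1 for all (s,a), R : S × A → ℝ, and γ ∈ [0,1). Let β̂ assign to each state s a nonempty finite subset β̂(s) ⊆ A, and define (T_In Q)(s,a) = R(s,a) + γ ∑_{s'} P(s'|s,a) · max_{a'∈β̂(s')} Q(s',a'). Then T_In is a γ-contraction on the in-sample area: for all f₁, f₂ : S × A → ℝ and all B ≥ 0, if |f₁(s,a) − f₂(s,a)| ≤ B for every s ∈ S and every a ∈ β̂(s), then |(T_In f₁)(s,a) − (T_In f₂)(s,a)| ≤ γ·B for every s ∈ S and every a ∈ β̂(s). -/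

import Mathlib

/-- The in-sample operator `T_In` is a `γ`-contraction on the in-sample area
`{(s,a) | a ∈ β̂(s)}` under the `L∞` norm. -/
theorem in_sample_operator_gamma_contraction
    {S A : Type*} [Fintype S] [Nonempty S]
    (P : S → A → S → ℝ) (R : S → A → ℝ) (γ : ℝ)
    (hγ0 : 0 ≤ γ) (hγ1 : γ < 1)
    (hPpos : ∀ s a s', 0 ≤ P s a s') (hPsum : ∀ s a, ∑ s' : S, P s a s' = 1)
    (βhat : S → Finset A) (hβhat : ∀ s, (βhat s).Nonempty)
    (TIn : (S → A → ℝ) → S → A → ℝ)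
    (hTIn : ∀ Q s a, TIn Q s a =
      R s a + γ * ∑ s' : S, P s a s' * (βhat s').sup' (hβhat s') (fun a' => Q s' a'))
    (f₁ f₂ : S → A → ℝ) (B : ℝ) (hB : 0 ≤ B)
    (hf : ∀ s, ∀ a ∈ βhat s, |f₁ s a - f₂ s a| ≤ B) :
    ∀ s, ∀ a ∈ βhat s, |TIn f₁ s a - TIn f₂ s a| ≤ γ * B := by
  intro s a ha
  have hsup : ∀ s' : S, |(βhat s').sup' (hβhat s') (fun a' => f₁ s' a') -
      (βhat s').sup' (hβhat s') (fun a' => f₂ s' a')| ≤ B := by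
    intro s'
    rw [abs_sub_le_iff]
    constructor
    · rw [sub_le_iff_le_add]
      apply Finset.sup'_le
      intro b hb
      calc f₁ s' b ≤ f₂ s' b + B := by
            have := hf s' b hb; rw [abs_sub_le_iff] at this; linarith [this.1]
        _ ≤ (βhat s').sup' (hβhat s') (fun a' => f₂ s' a') + B := by
            exact add_le_add_left (Finset.le_sup' _ hb) B
        _ = B + (βhat s').sup' (hβhat s') (fun a' => f₂ s' a') := add_comm _ _
    · rw [sub_le_iff_le_add]
      apply Finset.sup'_le
      intro b hb
      calc f₂ s' b ≤ f₁ s' b + B := by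
            have := hf s' b hb; rw [abs_sub_le_iff] at this; linarith [this.2]
        _ ≤ (βhat s').sup' (hβhat s') (fun a' => f₁ s' a') + B := by
            exact add_le_add_left (Finset.le_sup' _ hb) B
        _ = B + (βhat s').sup' (hβhat s') (fun a' => f₁ s' a') := add_comm _ _
  rw [hTIn, hTIn]
  have heq : R s a + γ * ∑ s' : S, P s a s' * (βhat s').sup' (hβhat s') (fun a' => f₁ s' a')
      - (R s a + γ * ∑ s' : S, P s a s' * (βhat s').sup' (hβhat s') (fun a' => f₂ s' a'))
      = γ * ∑ s' : S, P s a s' * ((βhat s').sup' (hβhat s') (fun a' => f₁ s' a')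
        - (βhat s').sup' (hβhat s') (fun a' => f₂ s' a')) := by
    rw [Finset.mul_sum, Finset.mul_sum, Finset.mul_sum, add_sub_add_left_eq_sub,
      ← Finset.sum_sub_distrib]
    apply Finset.sum_congr rfl
    intro x _
    ring
  rw [heq, abs_mul, abs_of_nonneg hγ0]
  apply mul_le_mul_of_nonneg_left _ hγ0
  calc |∑ s' : S, P s a s' * ((βhat s').sup' (hβhat s') (fun a' => f₁ s' a')
        - (βhat s').sup' (hβhat s') (fun a' => f₂ s' a'))|
      ≤ ∑ s' : S, |P s a s' * ((βhat s').sup' (hβhat s') (fun a' => f₁ s' a')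
        - (βhat s').sup' (hβhat s') (fun a' => f₂ s' a'))| := Finset.abs_sum_le_sum_abs _ _
    _ ≤ ∑ s' : S, P s a s' * B := by
        apply Finset.sum_le_sum
        intro s' _
        rw [abs_mul, abs_of_nonneg (hPpos s a s')]
        exact mul_le_mul_of_nonneg_left (hsup s') (hPpos s a s')
    _ = B := by rw [← Finset.sum_mul, hPsum, one_mul]
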